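/- arXiv:1709.01180 — 3 statements merged into one kernel-verified Lean document; each statement's English description precedes it below -/
import Mathlib

section
/- Let g(n) = ((N−n)·N²·Γ)/T + n^{2/3}/T^{2/3} for n ∈ [1, N], with N ≥ 1, T > 0, Γ > 0. If T > (27/8)·Γ³·N⁷ then g'(n) > 0 for all n ∈ [1, N], so g is strictly increasing on [1, N] and attains its minimum at n = 1. -/
open Finset

theorem mse_bound_large_budget (N : ℕ) (T Γ : ℝ) (hN : 1 ≤ N) (hT : 0 < T) (hΓ : 0 < Γ)
    (hbudget : (27 / 8) * Γ ^ 3 * (N : ℝ) ^ 7 < T) :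
    let g : ℝ → ℝ := fun n =>
      (((N : ℝ) - n) * (N : ℝ) ^ 2 * Γ) / T + n ^ ((2 : ℝ) / 3) / T ^ ((2 : ℝ) / 3)
    let g' : ℝ → ℝ := fun n =>
      2 / (3 * T ^ ((2 : ℝ) / 3) * n ^ ((1 : ℝ) / 3)) - Γ * (N : ℝ) ^ 2 / T
    (∀ n ∈ Set.Icc (1 : ℝ) (N : ℝ), 0 < g' n) ∧
      StrictMonoOn g (Set.Icc (1 : ℝ) (N : ℝ)) ∧
      (∀ n ∈ Set.Icc (1 : ℝ) (N : ℝ), g 1 ≤ g n) := by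
  intro g g'
  have hN1 : (1 : ℝ) ≤ (N : ℝ) := by exact_mod_cast hN
  have hN0 : (0 : ℝ) < (N : ℝ) := lt_of_lt_of_le one_pos hN1
  have hT23 : 0 < T ^ ((2 : ℝ) / 3) := Real.rpow_pos_of_pos hT _
  have hT13 : 0 < T ^ ((1 : ℝ) / 3) := Real.rpow_pos_of_pos hT _
  have hTsplit : T ^ ((2 : ℝ) / 3) * T ^ ((1 : ℝ) / 3) = T := by
    rw [← Real.rpow_add hT]; norm_num
  have key : ∀ n ∈ Set.Icc (1 : ℝ) (N : ℝ), 0 < g' n := by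
    intro x hx
    obtain ⟨hx1, hxN⟩ := hx
    have hx0 : 0 < x := lt_of_lt_of_le one_pos hx1
    have hx13 : 0 < x ^ ((1 : ℝ) / 3) := Real.rpow_pos_of_pos hx0 _
    have hcube : 3 * Γ * (N : ℝ) ^ 2 * x ^ ((1 : ℝ) / 3) < 2 * T ^ ((1 : ℝ) / 3) := by
      have hxcube : (x ^ ((1 : ℝ) / 3)) ^ (3 : ℕ) = x := by
        rw [← Real.rpow_natCast (x ^ ((1 : ℝ) / 3)) 3, ← Real.rpow_mul hx0.le]
        norm_num
      have hTcube : (T ^ ((1 : ℝ) / 3)) ^ (3 : ℕ) = T := by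
        rw [← Real.rpow_natCast (T ^ ((1 : ℝ) / 3)) 3, ← Real.rpow_mul hT.le]
        norm_num
      have h3 : (3 * Γ * (N : ℝ) ^ 2 * x ^ ((1 : ℝ) / 3)) ^ (3 : ℕ)
          < (2 * T ^ ((1 : ℝ) / 3)) ^ (3 : ℕ) := by
        have e1 : (3 * Γ * (N : ℝ) ^ 2 * x ^ ((1 : ℝ) / 3)) ^ (3 : ℕ)
            = 27 * Γ ^ 3 * (N : ℝ) ^ 6 * x := by
          rw [show (3 * Γ * (N : ℝ) ^ 2 * x ^ ((1 : ℝ) / 3)) ^ (3 : ℕ)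
              = 27 * Γ ^ 3 * (N : ℝ) ^ 6 * (x ^ ((1 : ℝ) / 3)) ^ (3 : ℕ) by ring, hxcube]
        have e2 : (2 * T ^ ((1 : ℝ) / 3)) ^ (3 : ℕ) = 8 * T := by
          rw [show (2 * T ^ ((1 : ℝ) / 3)) ^ (3 : ℕ)
              = 8 * (T ^ ((1 : ℝ) / 3)) ^ (3 : ℕ) by ring, hTcube]
        rw [e1, e2]
        have h1 : 27 * Γ ^ 3 * (N : ℝ) ^ 6 * x ≤ 27 * Γ ^ 3 * (N : ℝ) ^ 7 := by
          nlinarith [pow_pos hN0 6, pow_pos hΓ 3, mul_le_mul_of_nonneg_left hxN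
            (by positivity : (0:ℝ) ≤ 27 * Γ ^ 3 * (N : ℝ) ^ 6)]
        nlinarith [hbudget]
      exact lt_of_pow_lt_pow_left₀ 3 (by positivity) h3
    show 0 < 2 / (3 * T ^ ((2 : ℝ) / 3) * x ^ ((1 : ℝ) / 3)) - Γ * (N : ℝ) ^ 2 / T
    rw [sub_pos, div_lt_div_iff₀ hT (by positivity)]
    nlinarith [mul_lt_mul_of_pos_right hcube hT23]
  have hderiv : ∀ x ∈ Set.Icc (1 : ℝ) (N : ℝ), HasDerivAt g (g' x) x := by
    intro x hx
    have hx0 : 0 < x := lt_of_lt_of_le one_pos hx.1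
    have hx13 : 0 < x ^ ((1 : ℝ) / 3) := Real.rpow_pos_of_pos hx0 _
    have h1 : HasDerivAt (fun n : ℝ => (((N : ℝ) - n) * (N : ℝ) ^ 2 * Γ) / T)
        ((-1 * (N : ℝ) ^ 2 * Γ) / T) x :=
      ((((hasDerivAt_id x).const_sub ((N : ℝ))).mul_const ((N : ℝ) ^ 2)).mul_const Γ).div_const T
    have h2 : HasDerivAt (fun n : ℝ => n ^ ((2 : ℝ) / 3) / T ^ ((2 : ℝ) / 3))
        (((2 : ℝ) / 3 * x ^ ((2 : ℝ) / 3 - 1)) / T ^ ((2 : ℝ) / 3)) x :=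
      (Real.hasDerivAt_rpow_const (Or.inl hx0.ne')).div_const _
    have h := h1.add h2
    refine h.congr_deriv (Eq.symm ?_)
    have hexp : x ^ ((2 : ℝ) / 3 - 1) = (x ^ ((1 : ℝ) / 3))⁻¹ := by
      rw [show (2 : ℝ) / 3 - 1 = -(1 / 3) by norm_num, Real.rpow_neg hx0.le]
    show 2 / (3 * T ^ ((2 : ℝ) / 3) * x ^ ((1 : ℝ) / 3)) - Γ * (N : ℝ) ^ 2 / T = _
    rw [hexp]
    field_simp
    ring
  have hmono : StrictMonoOn g (Set.Icc (1 : ℝ) (N : ℝ)) := by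
    apply strictMonoOn_of_deriv_pos (convex_Icc _ _)
    · exact fun x hx => (hderiv x hx).continuousAt.continuousWithinAt
    · intro x hx
      rw [interior_Icc] at hx
      have hx' : x ∈ Set.Icc (1 : ℝ) (N : ℝ) := Set.Ioo_subset_Icc_self hx
      rw [(hderiv x hx').deriv]
      exact key x hx'
  refine ⟨key, hmono, ?_⟩
  intro n hn
  rcases eq_or_lt_of_le hn.1 with h | h
  · rw [← h]
  · exact le_of_lt (hmono ⟨le_refl _, hN1⟩ hn h)
end

section
/- Let β_1,...,β_N ∈ R^d, and let z_i, b_i be indicators of independent uniform random subsets of sizes n₂ and n₁ of {1,...,N}. Then E[‖Σ_i β_i ((N/n₂)z_i − (N/n₁)b_i)‖²] = (N/n₂ + N/n₁ − 2)·Σ_{i,j}⟨β_i,β_j⟩ − 2·( N(N−n₂)/(n₂(N−1)) + N(N−n₁)/(n₁(N−1)) )·Σ_{i<j}⟨β_i,β_j⟩. -/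
open Finset


lemma count_subsets {α : Type*} [DecidableEq α] {s t : Finset α} (ht : t ⊆ s) {n : ℕ}
    (hn : t.card ≤ n) :
    ((s.powersetCard n).filter (fun S => t ⊆ S)).card = (s.card - t.card).choose (n - t.card) := by
  rw [show s.card - t.card = (s \ t).card from (card_sdiff_of_subset ht).symm, ← card_powersetCard]
  apply Finset.card_bij (fun S _ => S \ t)
  · intro S hS
    simp only [mem_filter, mem_powersetCard] at hS
    obtain ⟨⟨hSs, hScard⟩, htS⟩ := hS
    rw [mem_powersetCard]
    exact ⟨sdiff_subset_sdiff hSs le_rfl, by rw [card_sdiff_of_subset htS, hScard]⟩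
  · intro S hS S' hS' h
    simp only [mem_filter] at hS hS'
    rw [← sdiff_union_of_subset hS.2, ← sdiff_union_of_subset hS'.2, h]
  · intro U hU
    rw [mem_powersetCard] at hU
    refine ⟨U ∪ t, ?_, ?_⟩
    · simp only [mem_filter, mem_powersetCard]
      have hdisj : Disjoint U t := disjoint_of_subset_left hU.1 sdiff_disjoint
      refine ⟨⟨union_subset (hU.1.trans sdiff_subset) ht, ?_⟩, subset_union_right⟩
      rw [card_union_of_disjoint hdisj, hU.2]
      omega
    · have hdisj : Disjoint U t := disjoint_of_subset_left hU.1 sdiff_disjoint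
      rw [union_sdiff_right, sdiff_eq_self_of_disjoint hdisj]

lemma choose_id1 {N k : ℕ} (h1 : 1 ≤ k) (h2 : k ≤ N) :
    N * (N-1).choose (k-1) = k * N.choose k := by
  have := Nat.add_one_mul_choose_eq (N-1) (k-1)
  have hN : N - 1 + 1 = N := by omega
  have hk : k - 1 + 1 = k := by omega
  simp only [Nat.succ_eq_add_one, hN, hk] at this
  rw [this, Nat.mul_comm]

lemma choose_id2 {N k : ℕ} (h1 : 2 ≤ k) (h2 : k ≤ N) :
    N * (N-1) * ((N-2).choose (k-2)) = k * (k-1) * N.choose k := by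
  have hA := choose_id1 (N := N) (k := k) (by omega) h2
  have hB := choose_id1 (N := N-1) (k := k-1) (by omega) (by omega)
  have e1 : N - 1 - 1 = N - 2 := by omega
  have e2 : k - 1 - 1 = k - 2 := by omega
  rw [e1, e2] at hB
  calc N * (N-1) * ((N-2).choose (k-2)) = N * ((N-1) * ((N-2).choose (k-2))) := by ring
    _ = N * ((k-1) * (N-1).choose (k-1)) := by rw [hB]
    _ = (k-1) * (N * (N-1).choose (k-1)) := by ring
    _ = (k-1) * (k * N.choose k) := by rw [hA]
    _ = k * (k-1) * N.choose k := by ring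

lemma sum_single (N k : ℕ) (h1 : 1 ≤ k) (h2 : k ≤ N) (i : Fin N) :
    ∑ S ∈ powersetCard k (univ : Finset (Fin N)), (if i ∈ S then (1:ℝ) else 0)
      = (k:ℝ)/(N:ℝ) * (N.choose k : ℝ) := by
  rw [Finset.sum_boole]
  have hfe : (powersetCard k (univ : Finset (Fin N))).filter (fun S => i ∈ S)
      = (powersetCard k (univ : Finset (Fin N))).filter (fun S => ({i} : Finset (Fin N)) ⊆ S) := by
    apply filter_congr; intro S _; simp
  rw [hfe, count_subsets (by simp) (by simpa using h1)]
  simp only [card_univ, Fintype.card_fin, card_singleton]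
  have hid := choose_id1 h1 h2
  have hN0 : (N:ℝ) ≠ 0 := Nat.cast_ne_zero.mpr (by omega)
  have hid' : (N-1).choose (k-1) * N = k * N.choose k := by rw [Nat.mul_comm]; exact hid
  field_simp
  exact_mod_cast hid'

lemma sum_pair (N k : ℕ) (hN : 2 ≤ N) (h2 : k ≤ N) (i j : Fin N) (hij : i ≠ j) :
    ∑ S ∈ powersetCard k (univ : Finset (Fin N)),
        (if i ∈ S then (1:ℝ) else 0) * (if j ∈ S then (1:ℝ) else 0)
      = (k:ℝ)*((k:ℝ)-1)/((N:ℝ)*((N:ℝ)-1)) * (N.choose k : ℝ) := by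
  have hrw : ∀ S : Finset (Fin N), (if i ∈ S then (1:ℝ) else 0) * (if j ∈ S then (1:ℝ) else 0)
      = if ({i, j} : Finset (Fin N)) ⊆ S then (1:ℝ) else 0 := by
    intro S
    simp only [ite_mul, one_mul, zero_mul, ← ite_and, insert_subset_iff, singleton_subset_iff]
  simp only [hrw]
  rw [Finset.sum_boole]
  have hcard : ({i, j} : Finset (Fin N)).card = 2 := by
    rw [card_insert_of_notMem (by simpa using hij), card_singleton]
  by_cases hk2 : 2 ≤ k
  · rw [count_subsets (by simp) (by omega : ({i,j} : Finset (Fin N)).card ≤ k)]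
    simp only [card_univ, Fintype.card_fin, hcard]
    have hid := choose_id2 hk2 h2
    have hN0 : (N:ℝ) ≠ 0 := by positivity
    have hN1 : (N:ℝ) - 1 ≠ 0 := by
      have : (2:ℝ) ≤ (N:ℝ) := by exact_mod_cast hN
      linarith
    have hk1 : (1:ℝ) ≤ (k:ℝ) := by exact_mod_cast hk2.trans' (by norm_num)
    field_simp
    have : ((N-2).choose (k-2) : ℝ) * ((N:ℝ) * ((N:ℝ)-1)) = (k:ℝ)*((k:ℝ)-1) * (N.choose k : ℝ) := by
      have c1 : ((N:ℝ)-1) = ((N-1 : ℕ) : ℝ) := by push_cast [Nat.cast_sub (by omega : 1 ≤ N)]; ring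
      have c2 : ((k:ℝ)-1) = ((k-1 : ℕ) : ℝ) := by push_cast [Nat.cast_sub (by omega : 1 ≤ k)]; ring
      have hid' : (N-2).choose (k-2) * (N * (N-1)) = k*(k-1)*N.choose k := by
        rw [← hid]; ring
      rw [c1, c2]
      exact_mod_cast hid'
    linarith [this]
  · have : ((univ.powersetCard k).filter (fun S => ({i,j} : Finset (Fin N)) ⊆ S)) = ∅ := by
      rw [filter_eq_empty_iff]
      intro S hS hsub
      rw [mem_powersetCard] at hS
      have := card_le_card hsub
      omega
    rw [this]
    interval_cases k <;> simp

section Helpers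

lemma sum_split_sym {N : ℕ} (x : Fin N → Fin N → ℝ) (hsym : ∀ i j, x i j = x j i) :
    ∑ i, ∑ j, x i j
      = (∑ i, x i i) + 2 * ∑ i, ∑ j ∈ Finset.univ.filter (fun j => i < j), x i j := by
  have h1 : ∀ i : Fin N, ∑ j, x i j
      = x i i + (∑ j ∈ Finset.univ.filter (fun j => i < j), x i j
          + ∑ j ∈ Finset.univ.filter (fun j => j < i), x i j) := by
    intro i
    rw [← Finset.sum_filter_add_sum_filter_not Finset.univ (fun j => i < j) (x i)]
    have hset : Finset.univ.filter (fun j => ¬ i < j)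
        = insert i (Finset.univ.filter (fun j => j < i)) := by
      ext j
      simp only [mem_filter, mem_univ, true_and, mem_insert, not_lt]
      constructor
      · intro h
        rcases lt_or_eq_of_le h with h | h
        · exact Or.inr h
        · exact Or.inl h
      · rintro (rfl | h)
        · exact le_rfl
        · exact h.le
    rw [hset, Finset.sum_insert (by simp)]
    ring
  have hJ : ∑ i, ∑ j ∈ Finset.univ.filter (fun j => j < i), x i j
      = ∑ i, ∑ j ∈ Finset.univ.filter (fun j => i < j), x i j := by
    rw [Finset.sum_comm' (s' := fun j => Finset.univ.filter (fun i => j < i))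
      (t' := Finset.univ) (by intro i j; simp)]
    exact Finset.sum_congr rfl fun j _ => Finset.sum_congr rfl fun i _ => hsym i j
  simp only [h1]
  rw [Finset.sum_add_distrib, Finset.sum_add_distrib, hJ]
  ring

lemma norm_sq_sum {E : Type*} [NormedAddCommGroup E] [InnerProductSpace ℝ E] {N : ℕ}
    (c : Fin N → ℝ) (v : Fin N → E) :
    ‖∑ i, c i • v i‖ ^ 2 = ∑ i, ∑ j, c i * c j * (inner ℝ (v i) (v j) : ℝ) := by
  rw [← real_inner_self_eq_norm_sq, sum_inner]
  refine Finset.sum_congr rfl fun i _ => ?_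
  rw [real_inner_smul_left, inner_sum, Finset.mul_sum]
  refine Finset.sum_congr rfl fun j _ => ?_
  rw [real_inner_smul_right]; ring

end Helpers

lemma sum_swap4 {α β' γ δ : Type*} (s : Finset α) (t : Finset β') (u : Finset γ) (v : Finset δ)
    (f : α → β' → γ → δ → ℝ) :
    ∑ p ∈ s, ∑ q ∈ t, ∑ c ∈ u, ∑ e ∈ v, f p q c e
      = ∑ c ∈ u, ∑ e ∈ v, ∑ p ∈ s, ∑ q ∈ t, f p q c e := by
  calc ∑ p ∈ s, ∑ q ∈ t, ∑ c ∈ u, ∑ e ∈ v, f p q c e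
      = ∑ p ∈ s, ∑ c ∈ u, ∑ q ∈ t, ∑ e ∈ v, f p q c e :=
        Finset.sum_congr rfl fun p _ => Finset.sum_comm
    _ = ∑ c ∈ u, ∑ p ∈ s, ∑ q ∈ t, ∑ e ∈ v, f p q c e := Finset.sum_comm
    _ = ∑ c ∈ u, ∑ p ∈ s, ∑ e ∈ v, ∑ q ∈ t, f p q c e :=
        Finset.sum_congr rfl fun c _ => Finset.sum_congr rfl fun p _ => Finset.sum_comm
    _ = ∑ c ∈ u, ∑ e ∈ v, ∑ p ∈ s, ∑ q ∈ t, f p q c e :=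
        Finset.sum_congr rfl fun c _ => Finset.sum_comm

theorem vr_B_term (N n₁ n₂ d : ℕ) (hN : 2 ≤ N)
    (hn₁ : 1 ≤ n₁) (hn₁N : n₁ ≤ N) (hn₂ : 1 ≤ n₂) (hn₂N : n₂ ≤ N)
    (β : Fin N → EuclideanSpace ℝ (Fin d)) :
    (∑ S₁ ∈ Finset.powersetCard n₁ (Finset.univ : Finset (Fin N)),
        ∑ S₂ ∈ Finset.powersetCard n₂ (Finset.univ : Finset (Fin N)),
          ‖∑ i, (((N : ℝ) / n₂) * (if i ∈ S₂ then (1 : ℝ) else 0) -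
              ((N : ℝ) / n₁) * (if i ∈ S₁ then (1 : ℝ) else 0)) • β i‖ ^ 2) /
        ((N.choose n₁ : ℝ) * (N.choose n₂ : ℝ))
      = ((N : ℝ) / n₂ + (N : ℝ) / n₁ - 2) * ∑ i, ∑ j, (inner ℝ (β i) (β j) : ℝ)
          - 2 * ((N : ℝ) * ((N : ℝ) - n₂) / ((n₂ : ℝ) * ((N : ℝ) - 1)) +
                  (N : ℝ) * ((N : ℝ) - n₁) / ((n₁ : ℝ) * ((N : ℝ) - 1))) *
              ∑ i, ∑ j ∈ Finset.univ.filter (fun j => i < j), (inner ℝ (β i) (β j) : ℝ) := by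
  classical
  have hN0 : (N : ℝ) ≠ 0 := Nat.cast_ne_zero.mpr (by omega)
  have hn₁0 : (n₁ : ℝ) ≠ 0 := Nat.cast_ne_zero.mpr (by omega)
  have hn₂0 : (n₂ : ℝ) ≠ 0 := Nat.cast_ne_zero.mpr (by omega)
  have hN1 : (N : ℝ) - 1 ≠ 0 := by
    have : (2 : ℝ) ≤ (N : ℝ) := by exact_mod_cast hN
    linarith
  have hC₁ : ((N.choose n₁ : ℕ) : ℝ) ≠ 0 := Nat.cast_ne_zero.mpr (Nat.choose_pos hn₁N).ne'
  have hC₂ : ((N.choose n₂ : ℕ) : ℝ) ≠ 0 := Nat.cast_ne_zero.mpr (Nat.choose_pos hn₂N).ne'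
  set a : ℝ := (N : ℝ) / n₂ with ha
  set b : ℝ := (N : ℝ) / n₁ with hb
  set C₁ : ℝ := ((N.choose n₁ : ℕ) : ℝ) with hC1def
  set C₂ : ℝ := ((N.choose n₂ : ℕ) : ℝ) with hC2def
  set q₁ : ℝ := (n₁ : ℝ) / N with hq1
  set q₂ : ℝ := (n₂ : ℝ) / N with hq2
  set r₁ : ℝ := (n₁ : ℝ) * ((n₁ : ℝ) - 1) / ((N : ℝ) * ((N : ℝ) - 1)) with hr1
  set r₂ : ℝ := (n₂ : ℝ) * ((n₂ : ℝ) - 1) / ((N : ℝ) * ((N : ℝ) - 1)) with hr2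
  set D : ℝ := a * a * q₂ + b * b * q₁ - 2 * a * b * (q₂ * q₁) with hD
  set F : ℝ := a * a * r₂ + b * b * r₁ - 2 * a * b * (q₂ * q₁) with hF
  set x : Fin N → Fin N → ℝ := fun i j => (inner ℝ (β i) (β j) : ℝ) with hxdef
  have hinner : ∀ i j : Fin N, (inner ℝ (β i) (β j) : ℝ) = x i j := fun _ _ => rfl
  simp only [hinner]
  have hsym : ∀ i j, x i j = x j i := fun i j => real_inner_comm _ _
  set P₁ := Finset.powersetCard n₁ (Finset.univ : Finset (Fin N)) with hP1
  set P₂ := Finset.powersetCard n₂ (Finset.univ : Finset (Fin N)) with hP2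
  have hQ₂ : ∀ i : Fin N, ∑ S ∈ P₂, (if i ∈ S then (1:ℝ) else 0) = q₂ * C₂ :=
    fun i => sum_single N n₂ hn₂ hn₂N i
  have hQ₁ : ∀ i : Fin N, ∑ S ∈ P₁, (if i ∈ S then (1:ℝ) else 0) = q₁ * C₁ :=
    fun i => sum_single N n₁ hn₁ hn₁N i
  have hV₂ : ∀ i j : Fin N, ∑ S ∈ P₂,
      (if i ∈ S then (1:ℝ) else 0) * (if j ∈ S then (1:ℝ) else 0)
        = (if i = j then q₂ else r₂) * C₂ := by
    intro i j
    by_cases h : i = j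
    · subst h
      rw [if_pos rfl]
      have hsq : ∀ S : Finset (Fin N),
          (if i ∈ S then (1:ℝ) else 0) * (if i ∈ S then (1:ℝ) else 0)
            = (if i ∈ S then (1:ℝ) else 0) := by
        intro S; by_cases hi : i ∈ S <;> simp [hi]
      simp only [hsq]
      exact hQ₂ i
    · rw [if_neg h]
      exact sum_pair N n₂ hN hn₂N i j h
  have hV₁ : ∀ i j : Fin N, ∑ S ∈ P₁,
      (if i ∈ S then (1:ℝ) else 0) * (if j ∈ S then (1:ℝ) else 0)
        = (if i = j then q₁ else r₁) * C₁ := by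
    intro i j
    by_cases h : i = j
    · subst h
      rw [if_pos rfl]
      have hsq : ∀ S : Finset (Fin N),
          (if i ∈ S then (1:ℝ) else 0) * (if i ∈ S then (1:ℝ) else 0)
            = (if i ∈ S then (1:ℝ) else 0) := by
        intro S; by_cases hi : i ∈ S <;> simp [hi]
      simp only [hsq]
      exact hQ₁ i
    · rw [if_neg h]
      exact sum_pair N n₁ hN hn₁N i j h
  have hcard1 : (P₁.card : ℝ) = C₁ := by
    rw [hP1, card_powersetCard, card_univ, Fintype.card_fin, hC1def]
  have hcard2 : (P₂.card : ℝ) = C₂ := by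
    rw [hP2, card_powersetCard, card_univ, Fintype.card_fin, hC2def]
  have key : ∀ i j : Fin N,
      (∑ S₁ ∈ P₁, ∑ S₂ ∈ P₂,
        (a * (if i ∈ S₂ then (1:ℝ) else 0) - b * (if i ∈ S₁ then (1:ℝ) else 0)) *
        (a * (if j ∈ S₂ then (1:ℝ) else 0) - b * (if j ∈ S₁ then (1:ℝ) else 0)))
      = C₁ * C₂ * (if i = j then D else F) := by
    intro i j
    have step1 : ∀ S₁ : Finset (Fin N), ∑ S₂ ∈ P₂,
        (a * (if i ∈ S₂ then (1:ℝ) else 0) - b * (if i ∈ S₁ then (1:ℝ) else 0)) *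
        (a * (if j ∈ S₂ then (1:ℝ) else 0) - b * (if j ∈ S₁ then (1:ℝ) else 0))
        = a * a * ((if i = j then q₂ else r₂) * C₂)
          - (a * b * q₂ * C₂) * (if j ∈ S₁ then (1:ℝ) else 0)
          - (a * b * q₂ * C₂) * (if i ∈ S₁ then (1:ℝ) else 0)
          + (C₂ * b * b) * ((if i ∈ S₁ then (1:ℝ) else 0) * (if j ∈ S₁ then (1:ℝ) else 0)) := by
      intro S₁
      have expand : ∀ S₂ : Finset (Fin N),
          (a * (if i ∈ S₂ then (1:ℝ) else 0) - b * (if i ∈ S₁ then (1:ℝ) else 0)) *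
          (a * (if j ∈ S₂ then (1:ℝ) else 0) - b * (if j ∈ S₁ then (1:ℝ) else 0))
          = a * a * ((if i ∈ S₂ then (1:ℝ) else 0) * (if j ∈ S₂ then (1:ℝ) else 0))
            - (a * b * (if j ∈ S₁ then (1:ℝ) else 0)) * (if i ∈ S₂ then (1:ℝ) else 0)
            - (a * b * (if i ∈ S₁ then (1:ℝ) else 0)) * (if j ∈ S₂ then (1:ℝ) else 0)
            + (b * b * ((if i ∈ S₁ then (1:ℝ) else 0) * (if j ∈ S₁ then (1:ℝ) else 0))) := by
        intro S₂; ring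
      rw [Finset.sum_congr rfl fun S₂ _ => expand S₂]
      rw [Finset.sum_add_distrib, Finset.sum_sub_distrib, Finset.sum_sub_distrib,
          ← Finset.mul_sum, ← Finset.mul_sum, ← Finset.mul_sum,
          Finset.sum_const, nsmul_eq_mul, hcard2]
      rw [hV₂ i j, hQ₂ i, hQ₂ j]
      ring
    rw [Finset.sum_congr rfl fun S₁ _ => step1 S₁]
    rw [Finset.sum_add_distrib, Finset.sum_sub_distrib, Finset.sum_sub_distrib]
    have hA : ∑ _S₁ ∈ P₁, (a * a * ((if i = j then q₂ else r₂) * C₂))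
        = C₁ * (a * a * ((if i = j then q₂ else r₂) * C₂)) := by
      rw [Finset.sum_const, nsmul_eq_mul, hcard1]
    have hB : ∑ S₁ ∈ P₁, (a * b * q₂ * C₂) * (if j ∈ S₁ then (1:ℝ) else 0)
        = (a * b * q₂ * C₂) * (q₁ * C₁) := by
      rw [← Finset.mul_sum, hQ₁ j]
    have hC : ∑ S₁ ∈ P₁, (a * b * q₂ * C₂) * (if i ∈ S₁ then (1:ℝ) else 0)
        = (a * b * q₂ * C₂) * (q₁ * C₁) := by
      rw [← Finset.mul_sum, hQ₁ i]
    have hDd : ∑ S₁ ∈ P₁, (C₂ * b * b) * ((if i ∈ S₁ then (1:ℝ) else 0) * (if j ∈ S₁ then (1:ℝ) else 0))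
        = (C₂ * b * b) * ((if i = j then q₁ else r₁) * C₁) := by
      rw [← Finset.mul_sum, hV₁ i j]
    rw [hA, hB, hC, hDd]
    by_cases h : i = j
    · simp only [if_pos h, hD]; ring
    · simp only [if_neg h, hF]; ring
  have hnorm : ∀ S₁ S₂ : Finset (Fin N),
      ‖∑ i, (a * (if i ∈ S₂ then (1:ℝ) else 0) - b * (if i ∈ S₁ then (1:ℝ) else 0)) • β i‖ ^ 2
      = ∑ i, ∑ j,
          (a * (if i ∈ S₂ then (1:ℝ) else 0) - b * (if i ∈ S₁ then (1:ℝ) else 0)) *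
          (a * (if j ∈ S₂ then (1:ℝ) else 0) - b * (if j ∈ S₁ then (1:ℝ) else 0)) * x i j :=
    fun S₁ S₂ => norm_sq_sum
      (fun i => a * (if i ∈ S₂ then (1:ℝ) else 0) - b * (if i ∈ S₁ then (1:ℝ) else 0)) β
  have hnum : (∑ S₁ ∈ P₁, ∑ S₂ ∈ P₂,
      ‖∑ i, (a * (if i ∈ S₂ then (1:ℝ) else 0) - b * (if i ∈ S₁ then (1:ℝ) else 0)) • β i‖ ^ 2)
      = C₁ * C₂ * ∑ i, ∑ j, (if i = j then D else F) * x i j := by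
    calc (∑ S₁ ∈ P₁, ∑ S₂ ∈ P₂,
        ‖∑ i, (a * (if i ∈ S₂ then (1:ℝ) else 0) - b * (if i ∈ S₁ then (1:ℝ) else 0)) • β i‖ ^ 2)
        = ∑ S₁ ∈ P₁, ∑ S₂ ∈ P₂, ∑ i, ∑ j,
            (a * (if i ∈ S₂ then (1:ℝ) else 0) - b * (if i ∈ S₁ then (1:ℝ) else 0)) *
            (a * (if j ∈ S₂ then (1:ℝ) else 0) - b * (if j ∈ S₁ then (1:ℝ) else 0)) * x i j :=
          Finset.sum_congr rfl fun S₁ _ => Finset.sum_congr rfl fun S₂ _ => hnorm S₁ S₂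
      _ = ∑ i, ∑ j, ∑ S₁ ∈ P₁, ∑ S₂ ∈ P₂,
            (a * (if i ∈ S₂ then (1:ℝ) else 0) - b * (if i ∈ S₁ then (1:ℝ) else 0)) *
            (a * (if j ∈ S₂ then (1:ℝ) else 0) - b * (if j ∈ S₁ then (1:ℝ) else 0)) * x i j :=
          sum_swap4 P₁ P₂ Finset.univ Finset.univ _
      _ = ∑ i, ∑ j, (∑ S₁ ∈ P₁, ∑ S₂ ∈ P₂,
            (a * (if i ∈ S₂ then (1:ℝ) else 0) - b * (if i ∈ S₁ then (1:ℝ) else 0)) *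
            (a * (if j ∈ S₂ then (1:ℝ) else 0) - b * (if j ∈ S₁ then (1:ℝ) else 0))) * x i j := by
          simp only [← Finset.sum_mul]
      _ = ∑ i, ∑ j, (C₁ * C₂ * (if i = j then D else F)) * x i j :=
          Finset.sum_congr rfl fun i _ => Finset.sum_congr rfl fun j _ => by rw [key i j]
      _ = ∑ i, C₁ * C₂ * ∑ j, (if i = j then D else F) * x i j :=
          Finset.sum_congr rfl fun i _ => by
            rw [Finset.mul_sum]
            exact Finset.sum_congr rfl fun j _ => by ring
      _ = C₁ * C₂ * ∑ i, ∑ j, (if i = j then D else F) * x i j := by rw [← Finset.mul_sum]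
  rw [hnum, mul_div_cancel_left₀ _ (mul_ne_zero hC₁ hC₂)]
  have hsplitw : ∀ i : Fin N, ∑ j, (if i = j then D else F) * x i j
      = F * (∑ j, x i j) + (D - F) * x i i := by
    intro i
    have hterm : ∀ j : Fin N, (if i = j then D else F) * x i j
        = F * x i j + (if i = j then (D - F) * x i j else 0) := by
      intro j; by_cases h : i = j
      · simp only [if_pos h]; ring
      · simp only [if_neg h]; ring
    rw [Finset.sum_congr rfl fun j _ => hterm j, Finset.sum_add_distrib, ← Finset.mul_sum,
        Finset.sum_ite_eq]
    simp
  have hLHS : ∑ i, ∑ j, (if i = j then D else F) * x i j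
      = F * (∑ i, ∑ j, x i j) + (D - F) * (∑ i, x i i) := by
    rw [Finset.sum_congr rfl fun i _ => hsplitw i, Finset.sum_add_distrib,
        ← Finset.mul_sum, ← Finset.mul_sum]
  rw [hLHS, sum_split_sym x hsym]
  have hid1 : D = a + b - 2 := by
    rw [hD, ha, hb, hq1, hq2]
    field_simp
  have hid2 : (N : ℝ) * ((N : ℝ) - n₂) / ((n₂ : ℝ) * ((N : ℝ) - 1)) +
      (N : ℝ) * ((N : ℝ) - n₁) / ((n₁ : ℝ) * ((N : ℝ) - 1)) = (a + b - 2) - F := by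
    rw [hF, ha, hb, hq1, hq2, hr1, hr2]
    field_simp
    ring
  rw [hid1, hid2]
  ring
end

section
/- For β_1,...,β_N ∈ R^d, N ≥ 2, and 1 ≤ n₂ < n₁ ≤ N, the quantity λ := (N/n₂ − N/n₁)·Σ_{i,j}⟨β_i,β_j⟩ − 2·( N(N−n₂)/(n₂(N−1)) − N(N−n₁)/(n₁(N−1)) )·Σ_{i<j}⟨β_i,β_j⟩ satisfies λ = (N³(n₁−n₂)/(n₁n₂))·( (1/N²)Σ_{i,j}⟨β_i,β_j⟩ − (2/(N(N−1)))Σ_{i<j}⟨β_i,β_j⟩ ) ≥ 0. -/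
open Finset

theorem vr_gain_lambda_nonneg (N n₁ n₂ d : ℕ) (hN : 2 ≤ N)
    (hn₂ : 1 ≤ n₂) (hn₂n₁ : n₂ < n₁) (hn₁N : n₁ ≤ N)
    (β : Fin N → EuclideanSpace ℝ (Fin d)) :
    ((N : ℝ) / n₂ - (N : ℝ) / n₁) * ∑ i, ∑ j, (inner ℝ (β i) (β j) : ℝ)
        - 2 * ((N : ℝ) * ((N : ℝ) - n₂) / ((n₂ : ℝ) * ((N : ℝ) - 1)) -
                (N : ℝ) * ((N : ℝ) - n₁) / ((n₁ : ℝ) * ((N : ℝ) - 1))) *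
            ∑ i, ∑ j ∈ Finset.univ.filter (fun j => i < j), (inner ℝ (β i) (β j) : ℝ)
      = ((N : ℝ) ^ 3 * ((n₁ : ℝ) - n₂) / ((n₁ : ℝ) * n₂)) *
          ((1 / (N : ℝ) ^ 2) * ∑ i, ∑ j, (inner ℝ (β i) (β j) : ℝ)
            - (2 / ((N : ℝ) * ((N : ℝ) - 1))) *
                ∑ i, ∑ j ∈ Finset.univ.filter (fun j => i < j), (inner ℝ (β i) (β j) : ℝ)) ∧
    0 ≤ ((N : ℝ) / n₂ - (N : ℝ) / n₁) * ∑ i, ∑ j, (inner ℝ (β i) (β j) : ℝ)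
        - 2 * ((N : ℝ) * ((N : ℝ) - n₂) / ((n₂ : ℝ) * ((N : ℝ) - 1)) -
                (N : ℝ) * ((N : ℝ) - n₁) / ((n₁ : ℝ) * ((N : ℝ) - 1))) *
            ∑ i, ∑ j ∈ Finset.univ.filter (fun j => i < j), (inner ℝ (β i) (β j) : ℝ) := by
  set S : ℝ := ∑ i, ∑ j, (inner ℝ (β i) (β j) : ℝ) with hS
  set T : ℝ := ∑ i, ∑ j ∈ Finset.univ.filter (fun j => i < j), (inner ℝ (β i) (β j) : ℝ) with hT
  have hNR : (1 : ℝ) < (N : ℝ) := by exact_mod_cast lt_of_lt_of_le one_lt_two (by exact_mod_cast hN)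
  have hN0 : (N : ℝ) ≠ 0 := by positivity
  have hN1 : (N : ℝ) - 1 ≠ 0 := by linarith
  have hn1R : (0 : ℝ) < (n₁ : ℝ) := by exact_mod_cast lt_of_le_of_lt (Nat.zero_le _) hn₂n₁
  have hn2R : (0 : ℝ) < (n₂ : ℝ) := by exact_mod_cast hn₂
  have hn1ne : (n₁ : ℝ) ≠ 0 := ne_of_gt hn1R
  have hn2ne : (n₂ : ℝ) ≠ 0 := ne_of_gt hn2R
  constructor
  · field_simp
    ring
  · -- D = diagonal
    have hsym : ∀ i j, (inner ℝ (β i) (β j) : ℝ) = (inner ℝ (β j) (β i) : ℝ) := fun i j =>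
      real_inner_comm _ _
    have hlow : ∑ i, ∑ j ∈ Finset.univ.filter (fun j => j < i), (inner ℝ (β i) (β j) : ℝ) = T := by
      rw [hT]
      simp only [Finset.sum_filter]
      rw [Finset.sum_comm]
      exact Finset.sum_congr rfl fun i _ => Finset.sum_congr rfl fun j _ => by
        by_cases h : i < j <;> simp [h, hsym i j]
    have hsplit : S = (∑ i, (inner ℝ (β i) (β i) : ℝ)) + 2 * T := by
      rw [hS]
      have : ∀ i : Fin N, ∑ j, (inner ℝ (β i) (β j) : ℝ)
          = (∑ j ∈ Finset.univ.filter (fun j => j < i), (inner ℝ (β i) (β j) : ℝ))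
            + ((inner ℝ (β i) (β i) : ℝ)
              + ∑ j ∈ Finset.univ.filter (fun j => i < j), (inner ℝ (β i) (β j) : ℝ)) := by
        intro i
        rw [← Finset.sum_filter_add_sum_filter_not Finset.univ (fun j => j < i)]
        congr 1
        have : Finset.univ.filter (fun j => ¬ j < i)
            = insert i (Finset.univ.filter (fun j => i < j)) := by
          ext j
          simp [not_lt, le_iff_lt_or_eq, or_comm, eq_comm]
        rw [this, Finset.sum_insert (by simp)]
      rw [Finset.sum_congr rfl fun i _ => this i, Finset.sum_add_distrib,
        Finset.sum_add_distrib, hlow]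
      ring
    have hDS : S ≤ (N : ℝ) * ∑ i, (inner ℝ (β i) (β i) : ℝ) := by
      have h1 : S = ‖∑ i, β i‖ ^ 2 := by
        rw [hS]
        rw [← real_inner_self_eq_norm_sq, sum_inner]
        exact Finset.sum_congr rfl fun i _ => (inner_sum _ _ _).symm
      have h2 : ∀ i, (inner ℝ (β i) (β i) : ℝ) = ‖β i‖ ^ 2 := fun i =>
        real_inner_self_eq_norm_sq _
      rw [h1, Finset.sum_congr rfl fun i _ => h2 i]
      calc ‖∑ i, β i‖ ^ 2 ≤ (∑ i, ‖β i‖) ^ 2 := by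
            apply pow_le_pow_left₀ (norm_nonneg _) (norm_sum_le _ _)
        _ ≤ (Finset.univ.card : ℝ) * ∑ i, ‖β i‖ ^ 2 := sq_sum_le_card_mul_sum_sq
        _ = (N : ℝ) * ∑ i, ‖β i‖ ^ 2 := by simp
    -- key: N*(N-1)*S - N^2*(S - D) where S - D = 2T ; i.e. bracket nonneg
    have hbr : 0 ≤ (1 / (N : ℝ) ^ 2) * S - (2 / ((N : ℝ) * ((N : ℝ) - 1))) * T := by
      have h2T : 2 * T = S - ∑ i, (inner ℝ (β i) (β i) : ℝ) := by linarith [hsplit]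
      rw [sub_nonneg, div_mul_eq_mul_div, div_mul_eq_mul_div,
        div_le_div_iff₀ (by nlinarith) (by nlinarith)]
      nlinarith [hDS, h2T]
    have hC : 0 ≤ (N : ℝ) ^ 3 * ((n₁ : ℝ) - n₂) / ((n₁ : ℝ) * n₂) := by
      have : (n₂ : ℝ) ≤ (n₁ : ℝ) := by exact_mod_cast le_of_lt hn₂n₁
      apply div_nonneg (mul_nonneg (by positivity) (by linarith)) (by positivity)
    have heq : ((N : ℝ) / n₂ - (N : ℝ) / n₁) * S
        - 2 * ((N : ℝ) * ((N : ℝ) - n₂) / ((n₂ : ℝ) * ((N : ℝ) - 1)) -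
                (N : ℝ) * ((N : ℝ) - n₁) / ((n₁ : ℝ) * ((N : ℝ) - 1))) * T
      = ((N : ℝ) ^ 3 * ((n₁ : ℝ) - n₂) / ((n₁ : ℝ) * n₂)) *
          ((1 / (N : ℝ) ^ 2) * S - (2 / ((N : ℝ) * ((N : ℝ) - 1))) * T) := by
      field_simp
      ring
    rw [heq]
    exact mul_nonneg hC hbr
end
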